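/- Let g ∈ ℝ^d, H a symmetric d×d matrix, r > 0, and let h* be a global minimizer of m(h) = ⟨g, h⟩ + (1/2)⟨Hh, h⟩ over the ball {h : ‖h‖ ≤ r}. Then there exists λ ≥ 0 such that (H + λI)h* = -g, H + λI is positive semidefinite, and λ(‖h*‖ - r) = 0. -/

import Mathlib

open Real RealInnerProductSpace

private lemma aux_small (a b δ : ℝ) (hδ : 0 < δ)
    (h : ∀ t : ℝ, 0 < t → t ≤ δ → 0 ≤ a + t * b) : 0 ≤ a := by
  by_contra h'
  push_neg at h'
  have hb1 : 0 < |b| + 1 := by positivity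
  set t := min δ (-a / (|b| + 1)) with ht
  have ht0 : 0 < t := lt_min hδ (div_pos (by linarith) hb1)
  have h1 := h t ht0 (min_le_left _ _)
  have ht2 : t * (|b| + 1) ≤ -a := (le_div_iff₀ hb1).mp (min_le_right _ _)
  have h2 : t * b ≤ t * |b| := mul_le_mul_of_nonneg_left (le_abs_self b) ht0.le
  linarith

private lemma aux_small2 (a b e δ : ℝ) (hδ : 0 < δ)
    (h : ∀ t : ℝ, 0 < t → t ≤ δ → 0 ≤ a + t * b + t ^ 2 * e) : 0 ≤ a := by
  apply aux_small a (b + δ * |e|) δ hδ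
  intro t ht htle
  have h1 := h t ht htle
  have h2 : t ^ 2 * e ≤ t * (δ * |e|) := by
    nlinarith [mul_nonneg ht.le (abs_nonneg e), le_abs_self e, sq_nonneg t,
      mul_nonneg (mul_nonneg ht.le ht.le) (sub_nonneg.mpr (le_abs_self e))]
  linarith

private lemma aux_expand {d : ℕ} (g : EuclideanSpace ℝ (Fin d))
    (H : EuclideanSpace ℝ (Fin d) →L[ℝ] EuclideanSpace ℝ (Fin d))
    (hsym : ∀ v w, ⟪H v, w⟫ = ⟪v, H w⟫) (x u : EuclideanSpace ℝ (Fin d)) :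
    ⟪g, x + u⟫ + (1 / 2) * ⟪H (x + u), x + u⟫ =
      (⟪g, x⟫ + (1 / 2) * ⟪H x, x⟫) + (⟪g + H x, u⟫ + (1 / 2) * ⟪H u, u⟫) := by
  have h1 : ⟪H u, x⟫ = ⟪H x, u⟫ := by rw [hsym u x, real_inner_comm]
  simp only [map_add, inner_add_left, inner_add_right]
  linarith

set_option maxHeartbeats 1000000 in
theorem stmt_19 {d : ℕ} (g : EuclideanSpace ℝ (Fin d))
    (H : EuclideanSpace ℝ (Fin d) →L[ℝ] EuclideanSpace ℝ (Fin d))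
    (hsym : ∀ v w, ⟪H v, w⟫ = ⟪v, H w⟫)
    (r : ℝ) (hr : 0 < r) (hstar : EuclideanSpace ℝ (Fin d)) (hfeas : ‖hstar‖ ≤ r)
    (hmin : ∀ h : EuclideanSpace ℝ (Fin d), ‖h‖ ≤ r →
      ⟪g, hstar⟫ + (1 / 2) * ⟪H hstar, hstar⟫ ≤ ⟪g, h⟫ + (1 / 2) * ⟪H h, h⟫) :
    ∃ lam : ℝ, 0 ≤ lam ∧ H hstar + lam • hstar = -g ∧
      (∀ v, 0 ≤ ⟪H v, v⟫ + lam * ‖v‖ ^ 2) ∧ lam * (‖hstar‖ - r) = 0 := by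
  set p := g + H hstar with hp
  -- basic variational inequality along feasible directions
  have hvar : ∀ u : EuclideanSpace ℝ (Fin d), ‖hstar + u‖ ≤ r →
      0 ≤ ⟪p, u⟫ + (1 / 2) * ⟪H u, u⟫ := by
    intro u hu
    have := hmin (hstar + u) hu
    rw [aux_expand g H hsym hstar u] at this
    linarith
  by_cases hlt : ‖hstar‖ < r
  · -- interior case: lam = 0
    -- small multiples of any v are feasible
    have hfeas' : ∀ v : EuclideanSpace ℝ (Fin d), ∀ t : ℝ, 0 < t →
        t ≤ (r - ‖hstar‖) / (‖v‖ + 1) → ‖hstar + t • v‖ ≤ r := by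
      intro v t ht htle
      have hv1 : 0 < ‖v‖ + 1 := by positivity
      have : t * (‖v‖ + 1) ≤ r - ‖hstar‖ := (le_div_iff₀ hv1).mp htle
      calc ‖hstar + t • v‖ ≤ ‖hstar‖ + ‖t • v‖ := norm_add_le _ _
        _ = ‖hstar‖ + t * ‖v‖ := by rw [norm_smul, Real.norm_eq_abs, abs_of_pos ht]
        _ ≤ r := by nlinarith
    have key : ∀ v : EuclideanSpace ℝ (Fin d), ∀ t : ℝ, 0 < t →
        t ≤ (r - ‖hstar‖) / (‖v‖ + 1) →
        0 ≤ t * ⟪p, v⟫ + t ^ 2 * ((1 / 2) * ⟪H v, v⟫) := by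
      intro v t ht htle
      have := hvar (t • v) (hfeas' v t ht htle)
      rw [real_inner_smul_right, map_smul, real_inner_smul_left, real_inner_smul_right] at this
      nlinarith
    have hlin : ∀ v : EuclideanSpace ℝ (Fin d), 0 ≤ ⟪p, v⟫ := by
      intro v
      have hδ : 0 < (r - ‖hstar‖) / (‖v‖ + 1) := by
        apply div_pos (by linarith) (by positivity)
      apply aux_small _ ((1 / 2) * ⟪H v, v⟫) _ hδ
      intro t ht htle
      have := key v t ht htle
      have h2 : 0 ≤ t * (⟪p, v⟫ + t * ((1 / 2) * ⟪H v, v⟫)) := by nlinarith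
      nlinarith
    have hp0 : p = 0 := by
      have h1 := hlin p
      have h2 := hlin (-p)
      rw [inner_neg_right] at h2
      have : ⟪p, p⟫ = (0 : ℝ) := le_antisymm (by linarith) real_inner_self_nonneg
      exact inner_self_eq_zero.mp this
    refine ⟨0, le_refl 0, ?_, ?_, by ring⟩
    · have h0 : g + H hstar = 0 := hp0
      have : H hstar = -g := eq_neg_of_add_eq_zero_right h0
      simpa using this
    · intro v
      simp only [mul_comm, zero_mul, add_zero]
      have hδ : 0 < (r - ‖hstar‖) / (‖v‖ + 1) := by
        apply div_pos (by linarith) (by positivity)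
      have := key v _ (half_pos hδ) (by linarith)
      rw [hp0] at this
      simp only [inner_zero_left, mul_zero, zero_add] at this
      have ht2 : 0 < ((r - ‖hstar‖) / (‖v‖ + 1) / 2) ^ 2 := by positivity
      nlinarith
  · -- boundary case
    have hb : ‖hstar‖ = r := le_antisymm hfeas (not_lt.mp hlt)
    have hhs : hstar ≠ 0 := by
      intro h0
      rw [h0, norm_zero] at hb
      exact hr.ne' hb.symm
    -- feasibility for directions decreasing the norm
    have hfeas2 : ∀ v : EuclideanSpace ℝ (Fin d), ⟪v, hstar⟫ < 0 → ∀ t : ℝ, 0 < t →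
        t ≤ -2 * ⟪v, hstar⟫ / (‖v‖ ^ 2 + 1) → ‖hstar + t • v‖ ≤ r := by
      intro v hvneg t ht htle
      have hv1 : (0:ℝ) < ‖v‖ ^ 2 + 1 := by positivity
      have h1 : t * (‖v‖ ^ 2 + 1) ≤ -2 * ⟪v, hstar⟫ := (le_div_iff₀ hv1).mp htle
      have hsq : ‖hstar + t • v‖ ^ 2 ≤ r ^ 2 := by
        rw [norm_add_sq_real, norm_smul, Real.norm_eq_abs, abs_of_pos ht,
          real_inner_smul_right, hb]
        have : ⟪hstar, v⟫ = ⟪v, hstar⟫ := real_inner_comm _ _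
        nlinarith
      nlinarith [norm_nonneg (hstar + t • v)]
    -- first order condition for strictly inward directions
    have hfirst : ∀ v : EuclideanSpace ℝ (Fin d), ⟪v, hstar⟫ < 0 → 0 ≤ ⟪p, v⟫ := by
      intro v hv
      have hδ : 0 < -2 * ⟪v, hstar⟫ / (‖v‖ ^ 2 + 1) :=
        div_pos (by linarith) (by positivity)
      apply aux_small _ ((1 / 2) * ⟪H v, v⟫) _ hδ
      intro t ht htle
      have := hvar (t • v) (hfeas2 v hv t ht htle)
      rw [real_inner_smul_right, map_smul, real_inner_smul_left, real_inner_smul_right] at this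
      nlinarith
    -- first order condition for tangential directions
    have hfirst0 : ∀ v : EuclideanSpace ℝ (Fin d), ⟪v, hstar⟫ ≤ 0 → 0 ≤ ⟪p, v⟫ := by
      intro v hv
      rcases lt_or_eq_of_le hv with hv' | hv'
      · exact hfirst v hv'
      · apply aux_small _ (-⟪p, hstar⟫) 1 one_pos
        intro ε hε _
        have h1 : ⟪v - ε • hstar, hstar⟫ < 0 := by
          rw [inner_sub_left, real_inner_smul_left, real_inner_self_eq_norm_sq, hb, hv']
          nlinarith [mul_pos hε (pow_pos hr 2)]
        have h2 := hfirst _ h1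
        rw [inner_sub_right, real_inner_smul_right] at h2
        linarith
    have honly : ∀ v : EuclideanSpace ℝ (Fin d), ⟪v, hstar⟫ = 0 → ⟪p, v⟫ = 0 := by
      intro v hv
      have h1 := hfirst0 v (le_of_eq hv)
      have h2 := hfirst0 (-v) (by rw [inner_neg_left, hv, neg_zero])
      rw [inner_neg_right] at h2
      linarith
    obtain ⟨c, hc⟩ : ∃ c : ℝ, c = ⟪p, hstar⟫ / r ^ 2 := ⟨_, rfl⟩
    have hw : ⟪p - c • hstar, hstar⟫ = 0 := by
      rw [inner_sub_left, real_inner_smul_left, real_inner_self_eq_norm_sq, hb, hc]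
      field_simp
      ring
    have hpw : ⟪p, p - c • hstar⟫ = 0 := honly _ hw
    have hpc : p = c • hstar := by
      have hww : ⟪p - c • hstar, p - c • hstar⟫ = (0 : ℝ) := by
        rw [inner_sub_right, real_inner_smul_right, hw, real_inner_comm, hpw]
        ring
      have := inner_self_eq_zero.mp hww
      rw [sub_eq_zero] at this
      exact this
    have hcneg : c ≤ 0 := by
      have h1 : ⟪-hstar, hstar⟫ < 0 := by
        rw [inner_neg_left, real_inner_self_eq_norm_sq, hb]
        nlinarith
      have h2 := hfirst _ h1
      rw [inner_neg_right, hpc, real_inner_smul_left, real_inner_self_eq_norm_sq, hb] at h2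
      nlinarith [pow_pos hr 2]
    obtain ⟨lam, hlam⟩ : ∃ lam : ℝ, lam = -c := ⟨_, rfl⟩
    -- positive semidefiniteness on non-tangential directions
    have key2 : ∀ v : EuclideanSpace ℝ (Fin d), ⟪v, hstar⟫ ≠ 0 →
        0 ≤ ⟪H v, v⟫ + lam * ‖v‖ ^ 2 := by
      intro v hv
      have hv0 : v ≠ 0 := by rintro rfl; simp at hv
      have hnv : (0 : ℝ) < ‖v‖ ^ 2 := by
        have := norm_pos_iff.mpr hv0
        positivity
      have ha2 : (0 : ℝ) < ⟪v, hstar⟫ ^ 2 :=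
        lt_of_le_of_ne (sq_nonneg _) (Ne.symm (pow_ne_zero 2 hv))
      obtain ⟨s, hs⟩ : ∃ s : ℝ, s = -2 * ⟪v, hstar⟫ / ‖v‖ ^ 2 := ⟨_, rfl⟩
      have hsn : s * ‖v‖ ^ 2 = -2 * ⟪v, hstar⟫ := by
        rw [hs]; field_simp
      have hwfeas : ‖hstar + s • v‖ ≤ r := by
        have h0 : 2 * s * ⟪v, hstar⟫ + s ^ 2 * ‖v‖ ^ 2 = 0 := by
          rw [hs]; field_simp; ring
        have hsq : ‖hstar + s • v‖ ^ 2 = r ^ 2 := by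
          rw [norm_add_sq_real, norm_smul, Real.norm_eq_abs, real_inner_smul_right, hb,
            mul_pow, sq_abs]
          have hcomm : ⟪hstar, v⟫ = ⟪v, hstar⟫ := real_inner_comm _ _
          rw [hcomm]
          linarith
        nlinarith [norm_nonneg (hstar + s • v)]
      have hineq := hvar (s • v) hwfeas
      rw [real_inner_smul_right, map_smul, real_inner_smul_left, real_inner_smul_right] at hineq
      have hpv : ⟪p, v⟫ = c * ⟪v, hstar⟫ := by
        rw [hpc, real_inner_smul_left, real_inner_comm]
      rw [hpv] at hineq
      -- multiply through by ‖v‖⁴ and use s‖v‖² = -2⟪v,hstar⟫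
      have hmain : 0 ≤ 2 * ⟪v, hstar⟫ ^ 2 * (⟪H v, v⟫ + lam * ‖v‖ ^ 2) := by
        have h4 : 0 ≤ (s * (c * ⟪v, hstar⟫) + 1 / 2 * (s * (s * ⟪H v, v⟫))) *
            (‖v‖ ^ 2 * ‖v‖ ^ 2) := mul_nonneg hineq (by positivity)
        have h5 : (s * (c * ⟪v, hstar⟫) + 1 / 2 * (s * (s * ⟪H v, v⟫))) *
            (‖v‖ ^ 2 * ‖v‖ ^ 2)
            = 2 * ⟪v, hstar⟫ ^ 2 * (⟪H v, v⟫ + (-c) * ‖v‖ ^ 2) := by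
          linear_combination (1 / 2 * ⟪H v, v⟫ * (‖v‖ ^ 2 * s - 2 * ⟪v, hstar⟫) +
            c * ⟪v, hstar⟫ * ‖v‖ ^ 2) * hsn
        rw [hlam, ← h5]
        exact h4
      nlinarith [hmain, ha2]
    refine ⟨lam, by rw [hlam]; linarith, ?_, ?_, by rw [hb]; ring⟩
    · have h0 : g + H hstar = c • hstar := hpc
      rw [hlam, neg_smul, ← h0]
      abel
    · intro v
      by_cases hv0 : ⟪v, hstar⟫ = 0
      · apply aux_small2 _ (2 * ⟪H v, hstar⟫)
          (⟪H hstar, hstar⟫ + lam * r ^ 2) 1 one_pos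
        intro ε hε _
        have hne : ⟪v + ε • hstar, hstar⟫ ≠ 0 := by
          rw [inner_add_left, real_inner_smul_left, hv0, real_inner_self_eq_norm_sq, hb,
            zero_add]
          exact (mul_pos hε (pow_pos hr 2)).ne'
        have h2 := key2 _ hne
        have hHexp : ⟪H (v + ε • hstar), v + ε • hstar⟫ =
            ⟪H v, v⟫ + 2 * ε * ⟪H v, hstar⟫ + ε ^ 2 * ⟪H hstar, hstar⟫ := by
          simp only [map_add, map_smul, inner_add_left, inner_add_right,
            real_inner_smul_left, real_inner_smul_right]
          have : ⟪H hstar, v⟫ = ⟪H v, hstar⟫ := by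
            rw [hsym hstar v, real_inner_comm]
          rw [this]; ring
        have hnexp : ‖v + ε • hstar‖ ^ 2 = ‖v‖ ^ 2 + ε ^ 2 * r ^ 2 := by
          rw [norm_add_sq_real, norm_smul, Real.norm_eq_abs, real_inner_smul_right,
            hv0, mul_pow, sq_abs, hb]
          ring
        rw [hHexp, hnexp] at h2
        ring_nf at h2 ⊢
        linarith
      · exact key2 v hv0
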